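/- For any 1 < p < q < 2, U_p' ⊆ U_q'; that is, every sequence in {0,1}^ℕ that is the unique p-expansion of its value is also the unique q-expansion of its value. -/

import Mathlib

open Filter Topology

noncomputable section

/-- The value `Σ_{i≥0} d i / q^(i+1)` of a (0-indexed) digit sequence `d` in base `q`;
this corresponds to `((d_i)_{i≥1})_q` with `d_i = d (i-1)`. -/
def seqVal (q : ℝ) (d : ℕ → ℕ) : ℝ := ∑' i : ℕ, (d i : ℝ) / q ^ (i + 1)

/-- `d` is a `q`-expansion of `x` with digits in `{0,1}`. -/
def IsExpansion (q x : ℝ) (d : ℕ → ℕ) : Prop :=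
  (∀ i, d i ≤ 1) ∧ x = seqVal q d

/-- `x` has a unique `q`-expansion. -/
def HasUniqueExpansion (q x : ℝ) : Prop := ∃! d : ℕ → ℕ, IsExpansion q x d

/-- The set `U(x)` of univoque bases of `x`. -/
def UBases (x : ℝ) : Set ℝ := {q | 1 < q ∧ q < 2 ∧ HasUniqueExpansion q x}

/-- `q_s(x) = inf U(x)`. -/
def qs (x : ℝ) : ℝ := sInf (UBases x)

/-- The univoque set `U_q` of `x ∈ [0, 1/(q-1)]` with a unique `q`-expansion. -/
def Uset (q : ℝ) : Set ℝ :=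
  {x | x ∈ Set.Icc 0 (1 / (q - 1)) ∧ HasUniqueExpansion q x}

/-- The set `U_q'` of digit sequences which are the unique `q`-expansion of their value. -/
def USeq (q : ℝ) : Set (ℕ → ℕ) :=
  {d | (∀ i, d i ≤ 1) ∧ ∀ e : ℕ → ℕ, IsExpansion q (seqVal q d) e → e = d}

/-- The Thue–Morse sequence: `τ 0 = 0`, `τ (2n) = τ n`, `τ (2n+1) = 1 - τ n`. -/
def IsThueMorse (τ : ℕ → ℕ) : Prop :=
  τ 0 = 0 ∧ (∀ n, τ (2 * n) = τ n) ∧ ∀ n, τ (2 * n + 1) = 1 - τ n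

/-- `q` is the Komornik–Loreti constant: the base in `(1,2)` with `1 = Σ_{i≥1} τ_i q^{-i}`. -/
def IsKL (τ : ℕ → ℕ) (q : ℝ) : Prop :=
  1 < q ∧ q < 2 ∧ (1 : ℝ) = ∑' i : ℕ, (τ (i + 1) : ℝ) / q ^ (i + 1)

/-- `Q` is the sequence of bases `q_n`: `Q 0 = 1` and for `n ≥ 1`, `Q n` is the root in
`(1,2)` of `1 = Σ_{i=1}^{2^n} τ_i q^{-i}`. -/
def IsBaseSeq (τ : ℕ → ℕ) (Q : ℕ → ℝ) : Prop :=
  Q 0 = 1 ∧ ∀ n, 1 ≤ n → 1 < Q n ∧ Q n < 2 ∧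
    (1 : ℝ) = ∑ i ∈ Finset.range (2 ^ n), (τ (i + 1) : ℝ) / (Q n) ^ (i + 1)

/-- `D_n = ⋃_{q ∈ (q_{n-1}, q_n]} U_q`. -/
def D (Q : ℕ → ℝ) (n : ℕ) : Set ℝ := ⋃ q ∈ Set.Ioc (Q (n - 1)) (Q n), Uset q

/-- The golden ratio. -/
def qG : ℝ := (1 + Real.sqrt 5) / 2

/-- Strict lexicographical order on digit sequences. -/
def seqLt (c d : ℕ → ℕ) : Prop := ∃ n, (∀ i, i < n → c i = d i) ∧ c n < d n

/-- The word `τ_1 ⋯ τ_m`. -/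
def tmPrefix (τ : ℕ → ℕ) (m : ℕ) : List ℕ := (List.range m).map fun i => τ (i + 1)

/-- `w⁻`: decrease the last digit of a word by 1. -/
def lastDec (w : List ℕ) : List ℕ := w.dropLast ++ [w.getLastD 0 - 1]

/-- `w⁺`: increase the last digit of a word by 1. -/
def lastInc (w : List ℕ) : List ℕ := w.dropLast ++ [w.getLastD 0 + 1]

/-- The reflection of a word. -/
def reflect (w : List ℕ) : List ℕ := w.map fun d => 1 - d

/-- The infinite sequence given by the prefix `p` followed by periodic repetition of `w`. -/
def prefPeriodic (p w : List ℕ) : ℕ → ℕ := fun j =>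
  if j < p.length then p.getD j 0 else w.getD ((j - p.length) % w.length) 0

/-- `z_n = ((τ_1⋯τ_{2^{n-1}})(τ_{2^{n-1}+1}⋯τ_{2^n})^∞)_{q_n}`. -/
def zVal (τ : ℕ → ℕ) (Q : ℕ → ℝ) (n : ℕ) : ℝ :=
  seqVal (Q n) (prefPeriodic (tmPrefix τ (2 ^ (n - 1)))
    ((List.range (2 ^ (n - 1))).map fun i => τ (2 ^ (n - 1) + (i + 1))))

/-- `z_{1,k} = Σ_{i=1}^k q_G^{-i} + 1/(q_G^k (q_G^2 - 1))`. -/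
def z1 (k : ℕ) : ℝ :=
  (∑ i ∈ Finset.range k, 1 / qG ^ (i + 1)) + 1 / (qG ^ k * (qG ^ 2 - 1))

namespace USeqMonoAux

variable {q : ℝ} {d : ℕ → ℕ}

lemma summable_geom (hq : 1 < q) : Summable (fun i : ℕ => 1 / q ^ (i + 1)) := by
  have h0 : (0:ℝ) ≤ 1/q := by positivity
  have h1 : 1/q < 1 := by rw [div_lt_one (by linarith)]; linarith
  have := (summable_geometric_of_lt_one h0 h1).mul_left (1/q)
  refine this.congr fun i => ?_
  rw [← one_div_pow, pow_succ, mul_comm, one_div_pow]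

lemma tsum_geom (hq : 1 < q) : ∑' i : ℕ, 1 / q ^ (i + 1) = 1 / (q - 1) := by
  have h0 : (0:ℝ) ≤ 1/q := by positivity
  have h1 : 1/q < 1 := by rw [div_lt_one (by linarith)]; linarith
  have h := tsum_geometric_of_lt_one h0 h1
  have : ∑' i : ℕ, 1 / q ^ (i + 1) = (1/q) * ∑' i : ℕ, (1/q) ^ i := by
    rw [← tsum_mul_left]
    exact tsum_congr fun i => by rw [← one_div_pow, pow_succ, mul_comm,  one_div_pow]
  rw [this, h]
  have hq0 : q ≠ 0 := by linarith
  have : 1 - 1/q = (q-1)/q := by field_simp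
  rw [this]
  field_simp

lemma summable_digits (hq : 1 < q) (hd : ∀ i, d i ≤ 1) :
    Summable (fun i : ℕ => (d i : ℝ) / q ^ (i + 1)) := by
  refine Summable.of_nonneg_of_le (fun i => by positivity) (fun i => ?_) (summable_geom hq)
  gcongr
  exact_mod_cast hd i

lemma seqVal_nonneg (hq : 1 < q) : 0 ≤ seqVal q d :=
  tsum_nonneg fun i => by positivity

lemma seqVal_le (hq : 1 < q) (hd : ∀ i, d i ≤ 1) : seqVal q d ≤ 1 / (q - 1) := by
  rw [← tsum_geom hq]
  refine Summable.tsum_le_tsum (fun i => ?_) (summable_digits hq hd) (summable_geom hq)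
  gcongr
  exact_mod_cast hd i

/-- the tail value `Σ_{j≥0} d_{n+j} q^{-(j+1)}` -/
def Tail (q : ℝ) (d : ℕ → ℕ) (n : ℕ) : ℝ := seqVal q (fun j => d (n + j))

lemma Tail_nonneg (hq : 1 < q) (n : ℕ) : 0 ≤ Tail q d n := seqVal_nonneg hq

lemma Tail_le (hq : 1 < q) (hd : ∀ i, d i ≤ 1) (n : ℕ) : Tail q d n ≤ 1 / (q - 1) :=
  seqVal_le hq fun i => hd _

lemma seqVal_splice (hq : 1 < q) (hd : ∀ i, d i ≤ 1) (n : ℕ) :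
    seqVal q d = (∑ i ∈ Finset.range n, (d i : ℝ) / q ^ (i + 1)) + (1 / q ^ n) * Tail q d n := by
  have hs := summable_digits hq hd
  rw [seqVal, ← Summable.sum_add_tsum_nat_add n hs]
  congr 1
  rw [Tail, seqVal, ← tsum_mul_left]
  refine tsum_congr fun j => ?_
  have hq0 : (0:ℝ) < q := by linarith
  rw [add_comm j n]
  have : q ^ (n + j + 1) = q ^ n * q ^ (j + 1) := by ring
  rw [this]
  field_simp

lemma Tail_add (hq : 1 < q) (hd : ∀ i, d i ≤ 1) (n : ℕ) :
    Tail q d n + Tail q (fun i => 1 - d i) n = 1 / (q - 1) := by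
  have h1 : Summable (fun i : ℕ => ((d (n + i) : ℝ)) / q ^ (i + 1)) :=
    summable_digits hq fun i => hd (n + i)
  have h2 : Summable (fun i : ℕ => (((1 - d (n + i) : ℕ) : ℝ)) / q ^ (i + 1)) :=
    summable_digits hq fun i => Nat.sub_le _ _
  rw [Tail, Tail, seqVal, seqVal, ← tsum_geom hq, ← Summable.tsum_add h1 h2]
  refine tsum_congr fun i => ?_
  have hc : ((1 - d (n + i) : ℕ) : ℝ) = 1 - (d (n + i) : ℝ) := by
    have := hd (n + i); push_cast [Nat.cast_sub this]; ring
  rw [hc, ← add_div]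
  ring_nf

end USeqMonoAux

namespace USeqMonoAux

/-- greedy partial sums -/
def gs (q x : ℝ) : ℕ → ℝ
  | 0 => 0
  | n + 1 => if gs q x n + 1 / q ^ (n + 1) ≤ x then gs q x n + 1 / q ^ (n + 1) else gs q x n

/-- greedy digits -/
def gd (q x : ℝ) (n : ℕ) : ℕ := if gs q x n + 1 / q ^ (n + 1) ≤ x then 1 else 0

lemma gd_le (q x : ℝ) (n : ℕ) : gd q x n ≤ 1 := by
  unfold gd; split <;> simp

lemma gs_succ (q x : ℝ) (n : ℕ) : gs q x (n + 1) =
    if gs q x n + 1 / q ^ (n + 1) ≤ x then gs q x n + 1 / q ^ (n + 1) else gs q x n := rfl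

lemma gs_eq_sum (q x : ℝ) (n : ℕ) :
    gs q x n = ∑ i ∈ Finset.range n, (gd q x i : ℝ) / q ^ (i + 1) := by
  induction n with
  | zero => simp [gs]
  | succ n ih =>
    rw [Finset.sum_range_succ, ← ih, gs_succ, gd]
    split <;> simp

lemma gs_invariant (hq1 : 1 < q) (hq2 : q < 2) {x : ℝ} (hx0 : 0 ≤ x)
    (hx1 : x ≤ 1 / (q - 1)) (n : ℕ) :
    gs q x n ≤ x ∧ x ≤ gs q x n + 1 / (q ^ n * (q - 1)) := by
  induction n with
  | zero => simp only [gs, pow_zero, one_mul, zero_add]; exact ⟨hx0, hx1⟩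
  | succ n ih =>
    have hqp : (0:ℝ) < q := by linarith
    have hpow : (0:ℝ) < q ^ n := pow_pos hqp n
    have hpow1 : (0:ℝ) < q ^ (n + 1) := pow_pos hqp (n + 1)
    have hq1' : (0:ℝ) < q - 1 := by linarith
    rw [gs_succ]
    split
    · rename_i h
      constructor
      · exact h
      · have : 1 / (q ^ n * (q - 1)) = 1 / q ^ (n + 1) + 1 / (q ^ (n + 1) * (q - 1)) := by
          rw [pow_succ]
          field_simp
          ring
        linarith [ih.2]
    · rename_i h
      push_neg at h
      refine ⟨ih.1, ?_⟩
      have : 1 / q ^ (n + 1) ≤ 1 / (q ^ (n + 1) * (q - 1)) := by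
        rw [div_le_div_iff₀ hpow1 (by positivity)]
        nlinarith
      linarith

lemma exists_expansion (hq1 : 1 < q) (hq2 : q < 2) {x : ℝ} (hx0 : 0 ≤ x)
    (hx1 : x ≤ 1 / (q - 1)) : ∃ c, IsExpansion q x c := by
  refine ⟨gd q x, gd_le q x, ?_⟩
  have hd : ∀ i, gd q x i ≤ 1 := gd_le q x
  have hs := summable_digits hq1 hd
  have h1 : Tendsto (fun n => ∑ i ∈ Finset.range n, (gd q x i : ℝ) / q ^ (i + 1)) atTop
      (𝓝 (seqVal q (gd q x))) := hs.hasSum.tendsto_sum_nat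
  have h2 : Tendsto (fun n => gs q x n) atTop (𝓝 x) := by
    have hqp : (0:ℝ) < q := by linarith
    have hgeo : Tendsto (fun n : ℕ => (1/q) ^ n) atTop (𝓝 0) := by
      apply tendsto_pow_atTop_nhds_zero_of_lt_one (by positivity)
      rw [div_lt_one hqp]; linarith
    have hlow : Tendsto (fun n : ℕ => x - (1/q) ^ n * (1 / (q - 1))) atTop (𝓝 x) := by
      have := (hgeo.mul_const (1 / (q - 1))).const_sub x
      simpa using this
    refine tendsto_of_tendsto_of_tendsto_of_le_of_le hlow tendsto_const_nhds
      (fun n => ?_) (fun n => (gs_invariant hq1 hq2 hx0 hx1 n).1)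
    have h := (gs_invariant hq1 hq2 hx0 hx1 n).2
    have : (1/q) ^ n * (1 / (q - 1)) = 1 / (q ^ n * (q - 1)) := by
      rw [one_div_pow]
      field_simp
    linarith [this ▸ h]
  have h2' : Tendsto (fun n => ∑ i ∈ Finset.range n, (gd q x i : ℝ) / q ^ (i + 1)) atTop
      (𝓝 x) := by
    refine h2.congr fun n => gs_eq_sum q x n
  exact tendsto_nhds_unique h2' h1

end USeqMonoAux

namespace USeqMonoAux

variable {q p : ℝ} {d : ℕ → ℕ}

/-- the greedy+lazy condition characterizing unique expansions -/
def Good (q : ℝ) (d : ℕ → ℕ) : Prop :=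
  ∀ n, (d n = 0 → Tail q d (n + 1) < 1) ∧ (d n = 1 → Tail q (fun i => 1 - d i) (n + 1) < 1)

lemma alt_expansion (hq1 : 1 < q) (hq2 : q < 2) (hd : ∀ i, d i ≤ 1) (n b : ℕ) (hb : b ≤ 1)
    {y : ℝ} (hy0 : 0 ≤ y) (hy1 : y ≤ 1 / (q - 1))
    (hval : (b : ℝ) + y = (d n : ℝ) + Tail q d (n + 1)) :
    ∃ e, IsExpansion q (seqVal q d) e ∧ e n = b := by
  obtain ⟨c, hc1, hc2⟩ := exists_expansion hq1 hq2 hy0 hy1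
  set e : ℕ → ℕ := fun i => if i < n then d i else if i = n then b else c (i - (n + 1)) with he
  have hen : e n = b := by simp [he]
  have hedig : ∀ i, e i ≤ 1 := by
    intro i
    simp only [he]
    split
    · exact hd i
    · split
      · exact hb
      · exact hc1 _
  refine ⟨e, ⟨hedig, ?_⟩, hen⟩
  have hTe : Tail q e (n + 1) = y := by
    rw [Tail]
    have : (fun j => e (n + 1 + j)) = c := by
      funext j
      simp only [he]
      rw [if_neg (by omega), if_neg (by omega)]
      congr 1
      omega
    rw [this, ← hc2]
  have hpre : ∑ i ∈ Finset.range n, (e i : ℝ) / q ^ (i + 1)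
      = ∑ i ∈ Finset.range n, (d i : ℝ) / q ^ (i + 1) := by
    refine Finset.sum_congr rfl fun i hi => ?_
    rw [Finset.mem_range] at hi
    simp [he, hi]
  rw [seqVal_splice hq1 hd (n + 1), seqVal_splice hq1 hedig (n + 1),
    Finset.sum_range_succ, Finset.sum_range_succ, hpre, hTe, hen]
  have hq0 : (0:ℝ) < q ^ (n + 1) := pow_pos (by linarith) _
  have hval' := congrArg (fun t : ℝ => t / q ^ (n + 1)) hval
  simp only [add_div] at hval'
  rw [one_div_mul_eq_div, one_div_mul_eq_div]
  linarith [hval']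

lemma good_of_mem (hq1 : 1 < q) (hq2 : q < 2) (hmem : d ∈ USeq q) : Good q d := by
  obtain ⟨hd, hu⟩ := hmem
  intro n
  constructor
  · intro h0
    by_contra hT
    push_neg at hT
    have hTle' : Tail q d (n + 1) ≤ 1 / (q - 1) := Tail_le hq1 hd (n + 1)
    obtain ⟨e, hexp, hen⟩ := alt_expansion hq1 hq2 hd n 1 le_rfl
      (y := Tail q d (n + 1) - 1) (by linarith) (by linarith)
      (by rw [h0]; push_cast; ring)
    have := hu e hexp
    rw [this] at hen
    omega
  · intro h1
    by_contra hT
    push_neg at hT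
    have hadd := Tail_add hq1 hd (n + 1)
    have hT0 : 0 ≤ Tail q d (n + 1) := Tail_nonneg hq1 _
    obtain ⟨e, hexp, hen⟩ := alt_expansion hq1 hq2 hd n 0 (by omega)
      (y := Tail q d (n + 1) + 1) (by linarith) (by linarith)
      (by rw [h1]; push_cast; ring)
    have := hu e hexp
    rw [this] at hen
    omega

lemma mem_of_good (hq1 : 1 < q) (hd : ∀ i, d i ≤ 1) (hg : Good q d) : d ∈ USeq q := by
  refine ⟨hd, fun e ⟨he1, he2⟩ => ?_⟩
  by_contra hne
  have hex : ∃ n, e n ≠ d n := by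
    by_contra h
    push_neg at h
    exact hne (funext h)
  classical
  let n := Nat.find hex
  have hn : e n ≠ d n := Nat.find_spec hex
  have hmin : ∀ i, i < n → e i = d i := fun i hi => by
    by_contra h
    exact absurd (Nat.find_min hex hi) (by simpa using h)
  have hq0 : (0:ℝ) < q ^ (n + 1) := pow_pos (by linarith) _
  have hkey : (d n : ℝ) + Tail q d (n + 1) = (e n : ℝ) + Tail q e (n + 1) := by
    have hsd := seqVal_splice hq1 hd (n + 1)
    have hse := seqVal_splice hq1 he1 (n + 1)
    rw [Finset.sum_range_succ] at hsd hse
    have hpre : ∑ i ∈ Finset.range n, (e i : ℝ) / q ^ (i + 1)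
        = ∑ i ∈ Finset.range n, (d i : ℝ) / q ^ (i + 1) := by
      refine Finset.sum_congr rfl fun i hi => ?_
      rw [Finset.mem_range] at hi
      rw [hmin i hi]
    rw [hpre] at hse
    have h := hsd.symm.trans (he2.trans hse)
    have h' : (d n : ℝ) / q ^ (n + 1) + 1 / q ^ (n + 1) * Tail q d (n + 1)
        = (e n : ℝ) / q ^ (n + 1) + 1 / q ^ (n + 1) * Tail q e (n + 1) := by linarith
    rw [one_div_mul_eq_div, one_div_mul_eq_div, ← add_div, ← add_div] at h'
    exact (div_left_inj' (ne_of_gt hq0)).mp h'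
  have hTd0 : 0 ≤ Tail q d (n + 1) := Tail_nonneg hq1 _
  have hTe0 : 0 ≤ Tail q e (n + 1) := Tail_nonneg hq1 _
  have hTele : Tail q e (n + 1) ≤ 1 / (q - 1) := Tail_le hq1 he1 _
  rcases Nat.le_one_iff_eq_zero_or_eq_one.mp (hd n) with hdn | hdn
  · have hen : e n = 1 := by have := he1 n; omega
    have hA := (hg n).1 hdn
    rw [hdn, hen] at hkey
    push_cast at hkey
    linarith
  · have hen : e n = 0 := by have := he1 n; omega
    have hB := (hg n).2 hdn
    have hadd := Tail_add hq1 hd (n + 1)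
    rw [hdn, hen] at hkey
    push_cast at hkey
    linarith

lemma Tail_mono (hp : 1 < p) (hpq : p ≤ q) (hd : ∀ i, d i ≤ 1) (n : ℕ) :
    Tail q d n ≤ Tail p d n := by
  have hq : 1 < q := lt_of_lt_of_le hp hpq
  refine Summable.tsum_le_tsum (fun j => ?_) (summable_digits hq fun i => hd _)
    (summable_digits hp fun i => hd _)
  gcongr

end USeqMonoAux


theorem USeq_mono (p q : ℝ) (hp : 1 < p) (hpq : p < q) (hq : q < 2) :
    USeq p ⊆ USeq q := by
  intro d hd
  have hq1 : 1 < q := hp.trans hpq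
  have hp2 : p < 2 := hpq.trans hq
  have hdig : ∀ i, d i ≤ 1 := hd.1
  have hg := USeqMonoAux.good_of_mem hp hp2 hd
  refine USeqMonoAux.mem_of_good hq1 hdig fun n => ?_
  exact ⟨fun h0 => lt_of_le_of_lt (USeqMonoAux.Tail_mono hp hpq.le hdig (n + 1)) ((hg n).1 h0),
    fun h1 => lt_of_le_of_lt
      (USeqMonoAux.Tail_mono hp hpq.le (fun i => Nat.sub_le _ _) (n + 1)) ((hg n).2 h1)⟩
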